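/- There exists a 9-dimensional stratified Lie algebra g = span(u_1,u_2,u_3,u_4) ⊕ span(v_1,…,v_5) with brackets [u_1,u_2] = [u_3,u_4] = v_1, [u_1,u_3] = v_2, [u_1,u_4] = v_3, [u_2,u_3] = v_4, [u_2,u_4] = v_5, and all v_i central, such that: (a) no two linearly independent vectors in the horizontal layer V_1 = span(u_1,u_2,u_3,u_4) commute; but (b) the 2-vector w = u_1 ∧ u_2 − u_3 ∧ u_4 satisfies Σ-antisymmetrized bracket contraction zero, i.e., [u_1,u_2] − [u_3,u_4] = 0, so the associated invariant 2-precurrent is a cycle. -/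

import Mathlib

open Submodule

/-- the standard basis of `ℝ⁹`; `e9 0, …, e9 3` play the role of `u₁,…,u₄` and
`e9 4, …, e9 8` the role of `v₁,…,v₅`. -/
noncomputable def e9 (i : Fin 9) : Fin 9 → ℝ := Pi.single i 1

/-- the horizontal layer `V₁ = span(u₁,u₂,u₃,u₄)`. -/
noncomputable def V1 : Submodule ℝ (Fin 9 → ℝ) :=
  Submodule.span ℝ {e9 0, e9 1, e9 2, e9 3}

/-- the second layer `V₂ = span(v₁,…,v₅)`. -/
noncomputable def V2 : Submodule ℝ (Fin 9 → ℝ) :=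
  Submodule.span ℝ {e9 4, e9 5, e9 6, e9 7, e9 8}

noncomputable def Bmap : (Fin 9 → ℝ) →ₗ[ℝ] (Fin 9 → ℝ) →ₗ[ℝ] (Fin 9 → ℝ) :=
  LinearMap.mk₂ ℝ (fun x y =>
    (x 0 * y 1 - x 1 * y 0 + x 2 * y 3 - x 3 * y 2) • e9 4 +
    (x 0 * y 2 - x 2 * y 0) • e9 5 +
    (x 0 * y 3 - x 3 * y 0) • e9 6 +
    (x 1 * y 2 - x 2 * y 1) • e9 7 +
    (x 1 * y 3 - x 3 * y 1) • e9 8)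
  (by intro x x' y; simp only [Pi.add_apply]; module)
  (by intro c x y; simp only [Pi.smul_apply, smul_eq_mul]; module)
  (by intro x y y'; simp only [Pi.add_apply]; module)
  (by intro c x y; simp only [Pi.smul_apply, smul_eq_mul]; module)

lemma Bmap_apply (x y : Fin 9 → ℝ) : Bmap x y =
    (x 0 * y 1 - x 1 * y 0 + x 2 * y 3 - x 3 * y 2) • e9 4 +
    (x 0 * y 2 - x 2 * y 0) • e9 5 +
    (x 0 * y 3 - x 3 * y 0) • e9 6 +
    (x 1 * y 2 - x 2 * y 1) • e9 7 +
    (x 1 * y 3 - x 3 * y 1) • e9 8 := rfl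

lemma Bmap_left_zero (x y : Fin 9 → ℝ) (h0 : x 0 = 0) (h1 : x 1 = 0)
    (h2 : x 2 = 0) (h3 : x 3 = 0) : Bmap x y = 0 := by
  simp [Bmap_apply, h0, h1, h2, h3]

lemma Bmap_low (x y : Fin 9 → ℝ) (i : Fin 9) (hi : (i : ℕ) < 4) : Bmap x y i = 0 := by
  fin_cases i <;>
    simp_all (config := { decide := true }) [Bmap_apply, e9, Pi.single_apply]

lemma mem_V1_high (a : Fin 9 → ℝ) (ha : a ∈ V1) (j : Fin 9) (hj : 4 ≤ (j : ℕ)) :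
    a j = 0 := by
  have : V1 ≤ LinearMap.ker (LinearMap.proj (R := ℝ) (φ := fun _ : Fin 9 => ℝ) j) := by
    rw [V1, span_le]
    intro v hv
    simp only [Set.mem_insert_iff, Set.mem_singleton_iff] at hv
    rcases hv with h|h|h|h <;> subst h <;>
      simp [LinearMap.mem_ker, e9, Pi.single_apply] <;> omega
  simpa using this ha

/-- there is a 9-dimensional stratified (step 2) Lie algebra structure on
`ℝ⁹ = V₁ ⊕ V₂` with brackets `[u₁,u₂] = [u₃,u₄] = v₁`, `[u₁,u₃] = v₂`, `[u₁,u₄] = v₃`,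
`[u₂,u₃] = v₄`, `[u₂,u₄] = v₅` and all `vᵢ` central, such that
(a) no two linearly independent horizontal vectors commute, yet
(b) `[u₁,u₂] − [u₃,u₄] = 0`, so the invariant 2-precurrent associated to
`u₁∧u₂ − u₃∧u₄` is a cycle. -/
theorem stmt15 :
    ∃ B : (Fin 9 → ℝ) →ₗ[ℝ] (Fin 9 → ℝ) →ₗ[ℝ] (Fin 9 → ℝ),
      (∀ x y, B x y = - B y x) ∧
      (∀ x y z, B (B x y) z + B (B y z) x + B (B z x) y = 0) ∧
      B (e9 0) (e9 1) = e9 4 ∧ B (e9 2) (e9 3) = e9 4 ∧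
      B (e9 0) (e9 2) = e9 5 ∧ B (e9 0) (e9 3) = e9 6 ∧
      B (e9 1) (e9 2) = e9 7 ∧ B (e9 1) (e9 3) = e9 8 ∧
      (∀ j : Fin 9, 4 ≤ (j : ℕ) → ∀ x, B (e9 j) x = 0) ∧
      (∀ x y, B x y ∈ V2) ∧
      (∀ a ∈ V1, ∀ b ∈ V1, LinearIndependent ℝ ![a, b] → B a b ≠ 0) ∧
      B (e9 0) (e9 1) - B (e9 2) (e9 3) = 0 := by
  have hBB : ∀ u v w : Fin 9 → ℝ, Bmap (Bmap u v) w = 0 := fun u v w =>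
    Bmap_left_zero _ _ (Bmap_low u v 0 (by decide)) (Bmap_low u v 1 (by decide))
      (Bmap_low u v 2 (by decide)) (Bmap_low u v 3 (by decide))
  have c1 : Bmap (e9 0) (e9 1) = e9 4 := by
    simp (config := { decide := true }) [Bmap_apply, e9, Pi.single_apply]
  have c2 : Bmap (e9 2) (e9 3) = e9 4 := by
    simp (config := { decide := true }) [Bmap_apply, e9, Pi.single_apply]
  refine ⟨Bmap, ?_, ?_, c1, c2, ?_, ?_, ?_, ?_, ?_, ?_, ?_, by rw [c1, c2, sub_self]⟩
  · intro x y; simp only [Bmap_apply]; module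
  · intro x y z; simp [hBB]
  · simp (config := { decide := true }) [Bmap_apply, e9, Pi.single_apply]
  · simp (config := { decide := true }) [Bmap_apply, e9, Pi.single_apply]
  · simp (config := { decide := true }) [Bmap_apply, e9, Pi.single_apply]
  · simp (config := { decide := true }) [Bmap_apply, e9, Pi.single_apply]
  · intro j hj x
    have hz : ∀ k : Fin 9, (k : ℕ) ≠ (j : ℕ) → e9 j k = 0 := fun k hk => by
      simpa [e9] using Pi.single_eq_of_ne (M := fun _ : Fin 9 => ℝ) (Fin.ne_of_val_ne hk) 1
    refine Bmap_left_zero _ _ (hz 0 ?_) (hz 1 ?_) (hz 2 ?_) (hz 3 ?_) <;> simp <;> omega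
  · intro x y
    rw [Bmap_apply]
    rw [V2]
    refine add_mem (add_mem (add_mem (add_mem ?_ ?_) ?_) ?_) ?_ <;>
      exact smul_mem _ _ (subset_span (by simp))
  · intro a ha b hb hInd h
    have ea := mem_V1_high a ha
    have eb := mem_V1_high b hb
    have h4 := congrFun h 4
    have h5 := congrFun h 5
    have h6 := congrFun h 6
    have h7 := congrFun h 7
    have h8 := congrFun h 8
    simp (config := { decide := true }) [Bmap_apply, e9, Pi.single_apply] at h4 h5 h6 h7 h8
    -- Plücker relation forces the remaining minor to vanish too
    have key : (a 0 * b 1 - a 1 * b 0) ^ 2 = 0 := by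
      have hP : (a 0 * b 1 - a 1 * b 0) ^ 2 =
          (a 0 * b 1 - a 1 * b 0) * (a 0 * b 1 - a 1 * b 0 + a 2 * b 3 - a 3 * b 2) -
          ((a 0 * b 2 - a 2 * b 0) * (a 1 * b 3 - a 3 * b 1) -
           (a 0 * b 3 - a 3 * b 0) * (a 1 * b 2 - a 2 * b 1)) := by ring
      rw [hP, h4, h5, h6, h7, h8]; ring
    have h01 : a 0 * b 1 - a 1 * b 0 = 0 := by
      have := sq_eq_zero_iff.mp key; linarith
    have h23 : a 2 * b 3 - a 3 * b 2 = 0 := by linarith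
    have M : ∀ i j : Fin 9, a i * b j = a j * b i := by
      intro i j
      rcases le_or_gt 4 (i : ℕ) with hi | hi
      · rw [ea i hi, eb i hi]; ring
      rcases le_or_gt 4 (j : ℕ) with hj | hj
      · rw [ea j hj, eb j hj]; ring
      have m01 : a 0 * b 1 = a 1 * b 0 := by linarith
      have m02 : a 0 * b 2 = a 2 * b 0 := by linarith
      have m03 : a 0 * b 3 = a 3 * b 0 := by linarith
      have m12 : a 1 * b 2 = a 2 * b 1 := by linarith
      have m13 : a 1 * b 3 = a 3 * b 1 := by linarith
      have m23 : a 2 * b 3 = a 3 * b 2 := by linarith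
      fin_cases i <;> fin_cases j <;>
        first
          | (exfalso; revert hi; decide)
          | (exfalso; revert hj; decide)
          | rfl
          | exact m01 | exact m01.symm | exact m02 | exact m02.symm
          | exact m03 | exact m03.symm | exact m12 | exact m12.symm
          | exact m13 | exact m13.symm | exact m23 | exact m23.symm
    obtain ⟨hbne, hno⟩ := linearIndependent_fin2.mp hInd
    simp only [Matrix.cons_val_one, Matrix.head_cons, Matrix.cons_val_zero] at hbne hno
    obtain ⟨i, hbi⟩ : ∃ i, b i ≠ 0 := by
      by_contra hc
      push_neg at hc
      exact hbne (funext hc)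
    refine hno (a i / b i) (funext fun j => ?_)
    show a i / b i * b j = a j
    field_simp
    linarith [M i j, M j i]
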